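/- Let Ω₀ = B(0,1) ⊂ ℝ^d, and for each star domain Ω define D[Ω](x) := c_Ω + b_Ω(x/‖x‖₂)·x on Ω₀. Then for any two star domains Ω₁, Ω₂: ‖D[Ω₁] − D[Ω₂]‖_{L²(Ω₀, ℝ^d)} ≤ d_U(Ω₁, Ω₂) · (∫_{Ω₀} (1 + ‖x‖₂)² dx)^{1/2}. In particular, the deformation system D : U → L²(Ω₀, ℝ^d) is Lipschitz continuous. -/
import Mathlib


open MeasureTheory

/-- Continuity (indeed Lipschitz continuity) of the star-domain
deformation system. `Ω₀ = B(0,1) ⊂ ℝ^d`, `D[Ω](x) = c_Ω + b_Ω(x/‖x‖)·x`, and for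
any two star domains (given by centroids `c₁, c₂` and positive Lipschitz boundary
functions `b₁, b₂` on the unit sphere):
`‖D[Ω₁] − D[Ω₂]‖_{L²(Ω₀,ℝ^d)} ≤ d_U(Ω₁,Ω₂) · (∫_{Ω₀} (1+‖x‖)² dx)^{1/2}`,
where `d_U(Ω₁,Ω₂) = ‖c₁−c₂‖ + sup_{e∈S} |b₁(e)−b₂(e)|`. -/
theorem stmt_7 {d : ℕ}
    (c₁ c₂ : EuclideanSpace ℝ (Fin d)) (b₁ b₂ : EuclideanSpace ℝ (Fin d) → ℝ)
    (L₁ L₂ : NNReal)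
    (hb₁ : LipschitzOnWith L₁ b₁ (Metric.sphere (0 : EuclideanSpace ℝ (Fin d)) 1))
    (hb₂ : LipschitzOnWith L₂ b₂ (Metric.sphere (0 : EuclideanSpace ℝ (Fin d)) 1))
    (hb₁m : Measurable b₁) (hb₂m : Measurable b₂)
    (hb₁p : ∀ e ∈ Metric.sphere (0 : EuclideanSpace ℝ (Fin d)) 1, 0 < b₁ e)
    (hb₂p : ∀ e ∈ Metric.sphere (0 : EuclideanSpace ℝ (Fin d)) 1, 0 < b₂ e) :
    (∫ x in Metric.ball (0 : EuclideanSpace ℝ (Fin d)) 1,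
        ‖(c₁ + b₁ (‖x‖⁻¹ • x) • x) - (c₂ + b₂ (‖x‖⁻¹ • x) • x)‖ ^ 2) ^ (1/2 : ℝ)
      ≤ (dist c₁ c₂ + ⨆ e : Metric.sphere (0 : EuclideanSpace ℝ (Fin d)) 1,
            |b₁ e - b₂ e|) *
        (∫ x in Metric.ball (0 : EuclideanSpace ℝ (Fin d)) 1,
            (1 + ‖x‖) ^ 2) ^ (1/2 : ℝ) := by
  set S : ℝ := ⨆ e : Metric.sphere (0 : EuclideanSpace ℝ (Fin d)) 1, |b₁ e - b₂ e| with hS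
  set M : ℝ := dist c₁ c₂ + S with hM
  have hSnn : 0 ≤ S := Real.iSup_nonneg fun e => abs_nonneg _
  have hMnn : 0 ≤ M := add_nonneg dist_nonneg hSnn
  -- sup bound on sphere
  have hbdd : BddAbove (Set.range fun e : Metric.sphere (0 : EuclideanSpace ℝ (Fin d)) 1 => |b₁ ↑e - b₂ ↑e|) := by
    have h := (isCompact_sphere (0 : EuclideanSpace ℝ (Fin d)) 1).bddAbove_image
      ((hb₁.continuousOn.sub hb₂.continuousOn).abs)
    rwa [Set.image_eq_range] at h
  -- pointwise bound
  have hpt : ∀ x : EuclideanSpace ℝ (Fin d), ‖(c₁ + b₁ (‖x‖⁻¹ • x) • x) - (c₂ + b₂ (‖x‖⁻¹ • x) • x)‖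
      ≤ M * (1 + ‖x‖) := by
    intro x
    have heq : (c₁ + b₁ (‖x‖⁻¹ • x) • x) - (c₂ + b₂ (‖x‖⁻¹ • x) • x)
        = (c₁ - c₂) + (b₁ (‖x‖⁻¹ • x) - b₂ (‖x‖⁻¹ • x)) • x := by
      rw [sub_smul]; abel
    rw [heq]
    have h1 : ‖(c₁ - c₂) + (b₁ (‖x‖⁻¹ • x) - b₂ (‖x‖⁻¹ • x)) • x‖
        ≤ ‖c₁ - c₂‖ + |b₁ (‖x‖⁻¹ • x) - b₂ (‖x‖⁻¹ • x)| * ‖x‖ := by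
      refine (norm_add_le _ _).trans ?_
      rw [norm_smul, Real.norm_eq_abs]
    refine h1.trans ?_
    rcases eq_or_ne x 0 with rfl | hx
    · simp only [norm_zero, mul_zero, add_zero, ← dist_eq_norm]
      nlinarith [dist_nonneg (x := c₁) (y := c₂)]
    · have hxn : ‖x‖ ≠ 0 := norm_ne_zero_iff.mpr hx
      have he : (‖x‖⁻¹ • x) ∈ Metric.sphere (0 : EuclideanSpace ℝ (Fin d)) 1 := by
        simp [norm_smul, abs_of_nonneg (inv_nonneg.mpr (norm_nonneg x)),
          inv_mul_cancel₀ hxn]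
      have hle : |b₁ (‖x‖⁻¹ • x) - b₂ (‖x‖⁻¹ • x)| ≤ S :=
        le_ciSup hbdd (⟨_, he⟩ : Metric.sphere (0 : EuclideanSpace ℝ (Fin d)) 1)
      rw [← dist_eq_norm]
      nlinarith [dist_nonneg (x := c₁) (y := c₂), norm_nonneg x,
        abs_nonneg (b₁ (‖x‖⁻¹ • x) - b₂ (‖x‖⁻¹ • x))]
  -- integrability of the dominating function
  have hgint : IntegrableOn (fun x : EuclideanSpace ℝ (Fin d) => M ^ 2 * (1 + ‖x‖) ^ 2)
      (Metric.ball (0 : EuclideanSpace ℝ (Fin d)) 1) := by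
    have : IntegrableOn (fun x : EuclideanSpace ℝ (Fin d) => M ^ 2 * (1 + ‖x‖) ^ 2)
        (Metric.closedBall (0 : EuclideanSpace ℝ (Fin d)) 1) :=
      (Continuous.continuousOn (continuous_const.mul ((continuous_const.add continuous_norm).pow 2))).integrableOn_compact
        (isCompact_closedBall 0 1)
    exact this.mono_set Metric.ball_subset_closedBall
  have hint : (∫ x in Metric.ball (0 : EuclideanSpace ℝ (Fin d)) 1,
        ‖(c₁ + b₁ (‖x‖⁻¹ • x) • x) - (c₂ + b₂ (‖x‖⁻¹ • x) • x)‖ ^ 2)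
      ≤ ∫ x in Metric.ball (0 : EuclideanSpace ℝ (Fin d)) 1, M ^ 2 * (1 + ‖x‖) ^ 2 := by
    refine integral_mono_of_nonneg ?_ hgint ?_
    · exact Filter.Eventually.of_forall fun x => by positivity
    · refine Filter.Eventually.of_forall fun x => ?_
      have := hpt x
      have h2 : ‖(c₁ + b₁ (‖x‖⁻¹ • x) • x) - (c₂ + b₂ (‖x‖⁻¹ • x) • x)‖ ^ 2
          ≤ (M * (1 + ‖x‖)) ^ 2 := pow_le_pow_left₀ (norm_nonneg _) this 2
      calc ‖(c₁ + b₁ (‖x‖⁻¹ • x) • x) - (c₂ + b₂ (‖x‖⁻¹ • x) • x)‖ ^ 2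
          ≤ (M * (1 + ‖x‖)) ^ 2 := h2
        _ = M ^ 2 * (1 + ‖x‖) ^ 2 := by ring
  have hconst : (∫ x in Metric.ball (0 : EuclideanSpace ℝ (Fin d)) 1, M ^ 2 * (1 + ‖x‖) ^ 2)
      = M ^ 2 * ∫ x in Metric.ball (0 : EuclideanSpace ℝ (Fin d)) 1, (1 + ‖x‖) ^ 2 :=
    integral_const_mul _ _
  have hInn : 0 ≤ ∫ x in Metric.ball (0 : EuclideanSpace ℝ (Fin d)) 1, (1 + ‖x‖) ^ 2 :=
    integral_nonneg fun x => by positivity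
  have hfin : (∫ x in Metric.ball (0 : EuclideanSpace ℝ (Fin d)) 1,
        ‖(c₁ + b₁ (‖x‖⁻¹ • x) • x) - (c₂ + b₂ (‖x‖⁻¹ • x) • x)‖ ^ 2) ^ (1/2 : ℝ)
      ≤ (M ^ 2 * ∫ x in Metric.ball (0 : EuclideanSpace ℝ (Fin d)) 1, (1 + ‖x‖) ^ 2) ^ (1/2 : ℝ) := by
    refine Real.rpow_le_rpow (integral_nonneg fun x => by positivity) ?_ (by norm_num)
    rw [← hconst]; exact hint
  refine hfin.trans_eq ?_
  rw [Real.mul_rpow (by positivity) hInn]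
  congr 1
  rw [← Real.rpow_natCast M 2, ← Real.rpow_mul hMnn]
  norm_num
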